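/- Let d ≥ 1 and let ε, e : ℤ → ℝ, φ : ℤ → ℝ^p, and θ̂ : ℤ → ℝ^p satisfy ε(t) = e(t) + φ(t−d)ᵀ(θ̂(t−1) − θ̂(t−d)) and ‖θ̂(s+1) − θ̂(s)‖ ≤ ρ(s)·|e(s+1)|/‖φ(s−d+1)‖ for all s, where ρ(s) ∈ {0,1} and ρ(s) = 0 whenever φ(s−d+1) = 0. Then whenever φ(t−d) ≠ 0: |ε(t)|/‖φ(t−d)‖ ≤ Σ_{j=0}^{d−1} ρ(t−j−1)·|e(t−j)|/‖φ(t−d−j)‖ + (1−ρ(t−1))·|e(t)|/‖φ(t−d)‖, and in particular if ρ(t−j−1)=1 whenever φ(t−d−j) ≠ 0, then |ε(t)|²/‖φ(t−d)‖² ≤ d·Σ_{j=0, φ(t−d−j)≠0}^{d−1} |e(t−j)|²/‖φ(t−d−j)‖². -/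
import Mathlib


open scoped RealInnerProductSpace Classical

theorem stmt_15 {p : ℕ} (d : ℕ) (hd : 1 ≤ d)
    (φ θhat : ℤ → EuclideanSpace ℝ (Fin p))
    (ε e : ℤ → ℝ) (ρ : ℤ → ℝ)
    (hρ : ∀ s : ℤ, ρ s = 0 ∨ ρ s = 1)
    (hρ0 : ∀ s : ℤ, φ (s - d + 1) = 0 → ρ s = 0)
    (hε : ∀ t : ℤ, ε t = e t + ⟪φ (t - d), θhat (t - 1) - θhat (t - d)⟫)
    (hstep : ∀ s : ℤ, ‖θhat (s + 1) - θhat s‖ ≤ ρ s * (|e (s + 1)| / ‖φ (s - d + 1)‖)) :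
    ∀ t : ℤ, φ (t - d) ≠ 0 →
      (|ε t| / ‖φ (t - d)‖ ≤
        (∑ j ∈ Finset.range d, ρ (t - j - 1) * (|e (t - j)| / ‖φ (t - d - j)‖)) +
          (1 - ρ (t - 1)) * (|e t| / ‖φ (t - d)‖)) ∧
      ((∀ j ∈ Finset.range d, φ (t - d - j) ≠ 0 → ρ (t - j - 1) = 1) →
        ε t ^ 2 / ‖φ (t - d)‖ ^ 2 ≤
          d * ∑ j ∈ Finset.range d,
            (if φ (t - d - j) ≠ 0 then e (t - j) ^ 2 / ‖φ (t - d - j)‖ ^ 2 else 0)) := by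
  intro t hφ
  have hφpos : 0 < ‖φ (t - d)‖ := norm_pos_iff.mpr hφ
  set x : ℕ → ℝ := fun j => ρ (t - j - 1) * (|e (t - j)| / ‖φ (t - d - j)‖) with hx
  have hxnn : ∀ j, 0 ≤ x j := by
    intro j
    have : 0 ≤ ρ (t - j - 1) := by rcases hρ (t - j - 1) with h | h <;> simp [h]
    exact mul_nonneg this (div_nonneg (abs_nonneg _) (norm_nonneg _))
  -- telescoping bound
  have htel : ‖θhat (t - 1) - θhat (t - d)‖ ≤ ∑ k ∈ Finset.range (d - 1), x (k + 1) := by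
    have hsum : ∑ k ∈ Finset.range (d - 1),
        (θhat (t - d + (k + 1)) - θhat (t - d + k)) = θhat (t - 1) - θhat (t - d) := by
      have h := Finset.sum_range_sub (fun k : ℕ => θhat (t - d + k)) (d - 1)
      simp only [Nat.cast_add, Nat.cast_one, Nat.cast_zero] at h ⊢
      rw [h]
      congr 2
      · have : ((d - 1 : ℕ) : ℤ) = (d : ℤ) - 1 := by omega
        rw [this]; ring
      · simp
    calc ‖θhat (t - 1) - θhat (t - d)‖
        = ‖∑ k ∈ Finset.range (d - 1), (θhat (t - d + (k + 1)) - θhat (t - d + k))‖ := by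
          rw [hsum]
      _ ≤ ∑ k ∈ Finset.range (d - 1), ‖θhat (t - d + (k + 1)) - θhat (t - d + k)‖ :=
          norm_sum_le _ _
      _ ≤ ∑ k ∈ Finset.range (d - 1), x (d - 1 - 1 - k + 1) := by
          apply Finset.sum_le_sum
          intro k hk
          have hk' : k < d - 1 := Finset.mem_range.mp hk
          have h1 : ((d - 1 - 1 - k + 1 : ℕ) : ℤ) = (d : ℤ) - 1 - k := by omega
          have h2 := hstep (t - d + k)
          have e1 : t - (d:ℤ) + k + 1 = t - d + (k + 1) := by ring
          have e2 : t - (d:ℤ) + k - d + 1 = t - (d : ℤ) - ((d : ℤ) - 1 - k) := by ring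
          rw [e1, e2] at h2
          simp only [hx, h1]
          have e3 : t - ((d:ℤ) - 1 - k) - 1 = t - d + k := by ring
          have e4 : t - ((d:ℤ) - 1 - k) = t - d + (k + 1) := by ring
          rw [e3, e4]
          exact h2
      _ = ∑ k ∈ Finset.range (d - 1), x (k + 1) :=
          Finset.sum_range_reflect (fun k => x (k + 1)) (d - 1)
  have hsplit : ∑ j ∈ Finset.range d, x j = (∑ k ∈ Finset.range (d - 1), x (k + 1)) + x 0 := by
    have h := Finset.sum_range_succ' x (d - 1)
    rwa [show d - 1 + 1 = d from by omega] at h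
  have hx0 : x 0 = ρ (t - 1) * (|e t| / ‖φ (t - d)‖) := by
    simp [hx]
  have main1 : |ε t| / ‖φ (t - d)‖ ≤
      (∑ j ∈ Finset.range d, x j) + (1 - ρ (t - 1)) * (|e t| / ‖φ (t - d)‖) := by
    have habs : |ε t| ≤ |e t| + ‖φ (t - d)‖ * ((∑ j ∈ Finset.range d, x j) - x 0) := by
      calc |ε t| = |e t + ⟪φ (t - d), θhat (t - 1) - θhat (t - d)⟫| := by rw [hε t]
        _ ≤ |e t| + |⟪φ (t - d), θhat (t - 1) - θhat (t - d)⟫| := abs_add_le _ _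
        _ ≤ |e t| + ‖φ (t - d)‖ * ‖θhat (t - 1) - θhat (t - d)‖ := by
            gcongr
            exact abs_real_inner_le_norm _ _
        _ ≤ |e t| + ‖φ (t - d)‖ * ((∑ j ∈ Finset.range d, x j) - x 0) := by
            gcongr
            rw [hsplit]; simpa using htel
    have hdiv : |ε t| / ‖φ (t - d)‖ ≤
        (|e t| + ‖φ (t - d)‖ * ((∑ j ∈ Finset.range d, x j) - x 0)) / ‖φ (t - d)‖ := by
      gcongr
    have hr : (|e t| + ‖φ (t - d)‖ * ((∑ j ∈ Finset.range d, x j) - x 0)) / ‖φ (t - d)‖ =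
        (∑ j ∈ Finset.range d, x j) + (1 - ρ (t - 1)) * (|e t| / ‖φ (t - d)‖) := by
      rw [hx0]; field_simp; ring
    rw [hr] at hdiv
    exact hdiv
  refine ⟨by simpa [hx] using main1, ?_⟩
  intro hone
  have h0 : ρ (t - 1) = 1 := by
    have h := hone 0 (Finset.mem_range.mpr hd)
    simp only [Nat.cast_zero, sub_zero] at h
    exact h hφ
  have main2 : |ε t| / ‖φ (t - d)‖ ≤ ∑ j ∈ Finset.range d, x j := by
    have h := main1
    rw [h0] at h
    simpa using h
  have hLnn : 0 ≤ |ε t| / ‖φ (t - d)‖ := div_nonneg (abs_nonneg _) (norm_nonneg _)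
  have hsq : (|ε t| / ‖φ (t - d)‖) ^ 2 ≤ (∑ j ∈ Finset.range d, x j) ^ 2 :=
    pow_le_pow_left₀ hLnn main2 2
  have hcs : (∑ j ∈ Finset.range d, x j) ^ 2 ≤
      (d : ℝ) * ∑ j ∈ Finset.range d, x j ^ 2 := by
    have h := sq_sum_le_card_mul_sum_sq (s := Finset.range d) (f := x)
    simpa using h
  have hterm : ∀ j ∈ Finset.range d, x j ^ 2 ≤
      (if φ (t - d - j) ≠ 0 then e (t - j) ^ 2 / ‖φ (t - d - j)‖ ^ 2 else 0) := by
    intro j hj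
    by_cases hz : φ (t - d - j) = 0
    · have hρz : ρ (t - j - 1) = 0 := by
        apply hρ0
        have h : t - (j : ℤ) - 1 - d + 1 = t - d - j := by ring
        rw [h]; exact hz
      simp [hx, hρz, hz]
    · have h1 : ρ (t - j - 1) = 1 := hone j hj hz
      rw [if_pos hz]
      simp only [hx, h1, one_mul]
      rw [div_pow, sq_abs]
  calc ε t ^ 2 / ‖φ (t - d)‖ ^ 2 = (|ε t| / ‖φ (t - d)‖) ^ 2 := by
        rw [div_pow, sq_abs]
    _ ≤ (∑ j ∈ Finset.range d, x j) ^ 2 := hsq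
    _ ≤ (d : ℝ) * ∑ j ∈ Finset.range d, x j ^ 2 := hcs
    _ ≤ (d : ℝ) * ∑ j ∈ Finset.range d,
          (if φ (t - d - j) ≠ 0 then e (t - j) ^ 2 / ‖φ (t - d - j)‖ ^ 2 else 0) := by
        gcongr with j hj
        exact hterm j hj
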